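/- For every 2 ≤ k ≤ n, the quotient q_k(κ) = s_k(κ)/s_{k−1}(κ) is strictly monotone on the Gårding cone Γ_k: for every κ ∈ Γ_k and every index 1 ≤ i ≤ n, the partial derivative satisfies (∂q_k/∂κ_i)(κ) > 0. -/

import Mathlib

/-- The `k`-th elementary symmetric polynomial of `x ∈ ℝⁿ`. -/
noncomputable def esymm (n k : ℕ) (x : Fin n → ℝ) : ℝ :=
  ∑ S ∈ Finset.powersetCard k (Finset.univ : Finset (Fin n)), ∏ i ∈ S, x i

/-- The Gårding cone `Γₖ = {κ ∈ ℝⁿ : sⱼ(κ) > 0 for all 1 ≤ j ≤ k}`. -/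
def gardingCone (n k : ℕ) : Set (Fin n → ℝ) :=
  {κ | ∀ j : ℕ, 1 ≤ j → j ≤ k → 0 < esymm n j κ}

open Finset Polynomial

namespace EsymmAux

lemma choose_identity (m p : ℕ) :
    (m.choose p : ℝ) * m.choose (p+2) * ((p+2) * (m - p : ℕ)) =
      (m.choose (p+1) : ℝ) * m.choose (p+1) * ((m - (p+1) : ℕ) * (p+1)) := by
  have h1 : (m.choose (p+2) : ℝ) * (p+2) = (m.choose (p+1) : ℝ) * ((m - (p+1) : ℕ)) := by
    exact_mod_cast congrArg (Nat.cast : ℕ → ℝ) (Nat.choose_succ_right_eq m (p+1))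
  have h2 : (m.choose (p+1) : ℝ) * (p+1) = (m.choose p : ℝ) * ((m - p : ℕ)) := by
    exact_mod_cast congrArg (Nat.cast : ℕ → ℝ) (Nat.choose_succ_right_eq m p)
  linear_combination ((m.choose p : ℝ) * ((m - p : ℕ) : ℝ)) * h1
    - ((m.choose (p+1) : ℝ) * ((m - (p+1) : ℕ) : ℝ)) * h2

lemma choose_mul_lt (m p : ℕ) (h : p + 2 ≤ m) :
    (m.choose p : ℝ) * m.choose (p+2) < (m.choose (p+1) : ℝ) * m.choose (p+1) := by
  have key := choose_identity m p
  have hb : ((m - p : ℕ) : ℝ) = ((m - (p+1) : ℕ) : ℝ) + 1 := by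
    have : m - p = (m - (p+1)) + 1 := by omega
    exact_mod_cast this
  rw [hb] at key
  have ha' : (1:ℝ) ≤ ((m - (p+1) : ℕ) : ℝ) := by
    have : 1 ≤ m - (p+1) := by omega
    exact_mod_cast this
  set a : ℝ := ((m - (p+1) : ℕ) : ℝ) with hadef
  have ha : (1:ℝ) ≤ a := ha'
  have hX1 : (0:ℝ) < m.choose (p+1) := by
    exact_mod_cast Nat.choose_pos (by omega : p + 1 ≤ m)
  have hX0 : (0:ℝ) ≤ m.choose p := by positivity
  have hX2 : (0:ℝ) ≤ m.choose (p+2) := by positivity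
  have hK : (0:ℝ) < ((p:ℝ)+2) * (a+1) := by nlinarith
  have hR : (0:ℝ) < (m.choose (p+1) : ℝ) * (m.choose (p+1)) := mul_pos hX1 hX1
  nlinarith [key, hK, hR, mul_nonneg hX0 hX2, mul_pos hR (by linarith : (0:ℝ) < a + p + 2)]

lemma choose_mul_le (m p : ℕ) :
    (m.choose p : ℝ) * m.choose (p+2) ≤ (m.choose (p+1) : ℝ) * m.choose (p+1) := by
  rcases le_or_gt (p + 2) m with h | h
  · exact (choose_mul_lt m p h).le
  · have h0 : (0:ℝ) ≤ (m.choose (p+1):ℝ) * (m.choose (p+1)) := by positivity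
    simpa [Nat.choose_eq_zero_of_lt h] using h0


lemma esymm_compl {n : ℕ} (k : ℕ) (hk : k ≤ n) (x : Fin n → ℝ) :
    esymm n k x = ∑ S ∈ powersetCard (n - k) (univ : Finset (Fin n)), ∏ l ∈ Sᶜ, x l := by
  unfold esymm
  refine sum_nbij' (i := fun S => Sᶜ) (j := fun S => Sᶜ) ?_ ?_ ?_ ?_ ?_
  · intro S hS
    rw [mem_powersetCard_univ] at hS ⊢
    rw [card_compl, hS, Fintype.card_fin]
  · intro S hS
    rw [mem_powersetCard_univ] at hS ⊢
    rw [card_compl, hS, Fintype.card_fin]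
    omega
  · intro S _; exact compl_compl S
  · intro S _; exact compl_compl S
  · intro S _; rw [compl_compl]

lemma sum_prod_erase {n : ℕ} (A : Finset (Fin n)) (hA : A.Nonempty) (x : Fin n → ℝ) :
    ∑ j ∈ A, ∏ l ∈ A.erase j, x l = ∑ S ∈ A.powersetCard (A.card - 1), ∏ l ∈ S, x l := by
  refine sum_bij (fun j _ => A.erase j) ?_ ?_ ?_ ?_
  · intro j hj
    rw [mem_powersetCard]
    exact ⟨erase_subset _ _, by rw [card_erase_of_mem hj]⟩
  · intro j hj j' hj' h
    by_contra hne
    have h1 : j' ∈ A.erase j := mem_erase.2 ⟨fun hc => hne hc.symm, hj'⟩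
    rw [h] at h1
    exact (mem_erase.1 h1).1 rfl
  · intro S hS
    rw [mem_powersetCard] at hS
    have hcard : (A \ S).card = 1 := by
      rw [card_sdiff_of_subset hS.1, hS.2]
      have := card_pos.2 hA
      omega
    obtain ⟨a, ha⟩ := card_eq_one.1 hcard
    have haA : a ∈ A := by
      have : a ∈ A \ S := ha ▸ mem_singleton_self a
      exact (mem_sdiff.1 this).1
    have haS : a ∉ S := by
      have : a ∈ A \ S := ha ▸ mem_singleton_self a
      exact (mem_sdiff.1 this).2
    refine ⟨a, haA, ?_⟩
    have hsub : S ⊆ A.erase a := fun y hy =>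
      mem_erase.2 ⟨fun hc => haS (hc ▸ hy), hS.1 hy⟩
    refine (Finset.eq_of_subset_of_card_le hsub ?_).symm
    rw [card_erase_of_mem haA, hS.2]
  · intro j _; rfl


lemma newton_top {m : ℕ} (hm : 2 ≤ m) (x : Fin m → ℝ) :
    2 * m * (esymm m (m-2) x * esymm m m x) ≤ ((m:ℝ) - 1) * (esymm m (m-1) x)^2 := by
  classical
  set P : Fin m → ℝ := fun i => ∏ l ∈ (univ.erase i), x l with hPdef
  have huniv : (univ : Finset (Fin m)).card = m := by
    rw [card_univ, Fintype.card_fin]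
  have hE1 : esymm m (m-1) x = ∑ i, P i := by
    have hne0 : (univ : Finset (Fin m)).Nonempty := by
      rw [← card_pos, huniv]; omega
    have h := sum_prod_erase (univ : Finset (Fin m)) hne0 x
    rw [huniv] at h
    rw [esymm, ← h]
  have hEm : ∀ i : Fin m, esymm m m x = x i * P i := by
    intro i
    rw [esymm]
    have h0 := powersetCard_self (univ : Finset (Fin m))
    rw [huniv] at h0
    rw [h0, sum_singleton]
    exact (mul_prod_erase univ x (mem_univ i)).symm
  have key : ∀ i : Fin m, ∀ j ∈ univ.erase i,
      P i * P j = esymm m m x * ∏ l ∈ (univ.erase i).erase j, x l := by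
    intro i j hj
    have hij : j ≠ i := (mem_erase.1 hj).1
    have hij' : i ∈ univ.erase j := mem_erase.2 ⟨hij.symm ∘ Eq.symm ∘ Eq.symm, mem_univ i⟩
    have h1 : P j = x i * ∏ l ∈ (univ.erase j).erase i, x l :=
      (mul_prod_erase (univ.erase j) x hij').symm
    have h2 : (univ.erase j).erase i = (univ.erase i).erase j := Finset.erase_right_comm
    rw [h1, h2, hEm i]
    ring
  have hsum2 : ∑ i, ∑ j ∈ univ.erase i, ∏ l ∈ (univ.erase i).erase j, x l
      = 2 * esymm m (m-2) x := by
    have inner : ∀ i : Fin m, ∑ j ∈ univ.erase i, ∏ l ∈ (univ.erase i).erase j, x l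
        = ∑ S ∈ (univ.erase i).powersetCard (m-2), ∏ l ∈ S, x l := by
      intro i
      have hne : (univ.erase i).Nonempty := by
        rw [← card_pos, card_erase_of_mem (mem_univ i), huniv]; omega
      have h := sum_prod_erase (univ.erase i) hne x
      rw [card_erase_of_mem (mem_univ i), huniv] at h
      have : m - 1 - 1 = m - 2 := by omega
      rw [this] at h
      exact h
    rw [sum_congr rfl (fun i _ => inner i)]
    have swap := sum_comm' (s := (univ : Finset (Fin m)))
      (t := fun i => (univ.erase i).powersetCard (m-2))
      (t' := powersetCard (m-2) (univ : Finset (Fin m)))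
      (s' := fun S => Sᶜ)
      (f := fun _ S => ∏ l ∈ S, x l) ?_
    · rw [swap]
      have hcompl : ∀ S ∈ powersetCard (m-2) (univ : Finset (Fin m)), (Sᶜ).card = 2 := by
        intro S hS
        rw [mem_powersetCard_univ] at hS
        rw [card_compl, hS, Fintype.card_fin]
        omega
      rw [esymm, mul_sum]
      refine sum_congr rfl (fun S hS => ?_)
      rw [sum_const, hcompl S hS, nsmul_eq_mul]
      norm_num
    · intro i S
      simp only [mem_univ, true_and, mem_powersetCard, subset_erase, mem_compl,
        subset_univ, mem_powersetCard_univ]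
  have expand : ∑ i, ∑ j ∈ univ.erase i, P i * P j
      = esymm m m x * (2 * esymm m (m-2) x) := by
    rw [← hsum2, mul_sum]
    refine sum_congr rfl (fun i _ => ?_)
    rw [mul_sum]
    exact sum_congr rfl (fun j hj => key i j hj)
  have expand2 : ∑ i, ∑ j ∈ univ.erase i, P i * P j
      = (∑ i, P i)^2 - ∑ i, (P i)^2 := by
    have h1 : ∀ i : Fin m, ∑ j ∈ univ.erase i, P i * P j = P i * ((∑ j, P j) - P i) := by
      intro i
      rw [← mul_sum, Finset.sum_erase_eq_sub (mem_univ i)]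
    rw [sum_congr rfl (fun i _ => h1 i)]
    calc ∑ i, P i * ((∑ j, P j) - P i)
        = (∑ i, P i * (∑ j, P j)) - ∑ i, P i * P i := by
          rw [← sum_sub_distrib]
          exact sum_congr rfl fun i _ => mul_sub _ _ _
      _ = (∑ i, P i)^2 - ∑ i, (P i)^2 := by
          rw [← sum_mul]
          simp only [sq]
  have CS : (∑ i, P i)^2 ≤ (m:ℝ) * ∑ i, (P i)^2 := by
    have h := sq_sum_le_card_mul_sum_sq (s := (univ : Finset (Fin m))) (f := P)
    rwa [huniv] at h
  have hcomb : esymm m m x * (2 * esymm m (m-2) x) = (∑ i, P i)^2 - ∑ i, (P i)^2 := by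
    rw [← expand, ← expand2]
  rw [hE1]
  nlinarith [hcomb, CS]


lemma esymm_toList (s : Multiset ℝ) (r : ℕ) :
    s.esymm r = esymm s.toList.length r s.toList.get := by
  have h : (Multiset.map s.toList.get Finset.univ.val) = s := by
    rw [Fin.univ_val_map, List.ofFn_get]
    exact s.coe_toList
  conv_lhs => rw [← h]
  rw [Finset.esymm_map_val]
  rfl

lemma newton_norm (j : ℕ) (hj : 1 ≤ j) (m : ℕ) (hm : j + 1 ≤ m) :
    ∀ s : Multiset ℝ, Multiset.card s = m →
      s.esymm (j-1) / (m.choose (j-1) : ℝ) * (s.esymm (j+1) / (m.choose (j+1) : ℝ))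
        ≤ (s.esymm j / (m.choose j : ℝ))^2 := by
  induction m, hm using Nat.le_induction with
  | base =>
    intro s hs
    have hlen : s.toList.length = j + 1 := by rw [Multiset.length_toList, hs]
    set L := s.toList.length with hL
    have e1 : s.esymm (j-1) = esymm L (L-2) s.toList.get := by
      rw [esymm_toList]; congr 1; omega
    have e2 : s.esymm j = esymm L (L-1) s.toList.get := by
      rw [esymm_toList]; congr 1; omega
    have e3 : s.esymm (j+1) = esymm L L s.toList.get := by
      rw [esymm_toList]; congr 1; omega
    have top := newton_top (m := L) (by omega) s.toList.get
    have hLcast : (L:ℝ) = (j:ℝ) + 1 := by exact_mod_cast congrArg (Nat.cast : ℕ → ℝ) hlen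
    rw [hLcast] at top
    have c1 : (((j+1)).choose (j+1) : ℝ) = 1 := by rw [Nat.choose_self]; norm_num
    have c2 : (((j+1)).choose j : ℝ) = (j:ℝ) + 1 := by
      rw [Nat.choose_succ_self_right]; push_cast; ring
    have c3 : (((j+1)).choose (j-1) : ℝ) = ((j:ℝ)+1) * j / 2 := by
      have h' : (j+1).choose (j-1) = (j+1).choose 2 := by
        have e : j - 1 = (j+1) - 2 := by omega
        rw [e, Nat.choose_symm (by omega : 2 ≤ j+1)]
      rw [h', Nat.cast_choose_two]; push_cast; try ring
    rw [e1, e2, e3, c1, c2, c3]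
    have hjR : (1:ℝ) ≤ (j:ℝ) := by exact_mod_cast hj
    rw [div_one, div_pow, div_mul_eq_mul_div,
      div_le_div_iff₀ (by nlinarith) (by nlinarith)]
    have top2 := mul_le_mul_of_nonneg_left top (show (0:ℝ) ≤ ((j:ℝ)+1)/2 by positivity)
    nlinarith [top2]
  | succ m hm IH =>
    intro s hs
    set P : Polynomial ℝ := (s.map (fun t => X - C t)).prod with hPdef
    have hmonic : P.Monic :=
      monic_multiset_prod_of_monic _ _ (fun a _ => monic_X_sub_C a)
    have hdeg : P.natDegree = m + 1 := by
      rw [hPdef, natDegree_multiset_prod_X_sub_C_eq_card, hs]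
    have hroots : P.roots = s := roots_multiset_prod_X_sub_C s
    have hd1 : (derivative P).natDegree ≤ m := by
      have h := natDegree_derivative_le P
      omega
    have hcard : Multiset.card (derivative P).roots = m := by
      have hub := Polynomial.card_roots' (derivative P)
      have hlb := Polynomial.card_roots_le_derivative P
      rw [hroots, hs] at hlb
      omega
    have hd : (derivative P).natDegree = m := by
      have := hcard ▸ Polynomial.card_roots' (derivative P)
      omega
    have hlead : (derivative P).leadingCoeff = (m:ℝ) + 1 := by
      rw [Polynomial.leadingCoeff, hd, Polynomial.coeff_derivative]
      have h1 : P.coeff (m + 1) = 1 := by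
        rw [← hdeg]; exact hmonic.coeff_natDegree
      rw [h1]; push_cast; ring
    set t := (derivative P).roots with htdef
    have hfact : C ((m:ℝ)+1) * (t.map (fun t => X - C t)).prod = derivative P := by
      have h := C_leadingCoeff_mul_prod_multiset_X_sub_C (p := derivative P)
        (by rw [hcard, hd])
      rw [hlead] at h
      exact h
    have key : ∀ i : ℕ, i ≤ m → ((m:ℝ) + 1 - i) * s.esymm i = ((m:ℝ)+1) * t.esymm i := by
      intro i hi
      have hc1 := Polynomial.coeff_derivative P (m - i)
      have hc2 : P.coeff (m - i + 1) = (-1:ℝ)^i * s.esymm i := by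
        have h' := Multiset.prod_X_sub_C_coeff s
          (show m - i + 1 ≤ Multiset.card s by rw [hs]; omega)
        rw [hs] at h'
        have hi' : m + 1 - (m - i + 1) = i := by omega
        rw [hi'] at h'
        exact h'
      have hc3 : (derivative P).coeff (m - i) = ((m:ℝ)+1) * ((-1:ℝ)^i * t.esymm i) := by
        conv_lhs => rw [← hfact]
        rw [coeff_C_mul]
        have h' := Multiset.prod_X_sub_C_coeff t
          (show m - i ≤ Multiset.card t by rw [hcard]; omega)
        rw [hcard] at h'
        have hi' : m - (m - i) = i := by omega
        rw [hi'] at h'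
        rw [h']
      rw [hc2] at hc1
      rw [hc1] at hc3
      have hcast : ((m - i : ℕ) : ℝ) = (m:ℝ) - i := by
        rw [Nat.cast_sub hi]
      rw [hcast] at hc3
      have h4 : ((-1:ℝ))^i * (((m:ℝ)+1-i) * s.esymm i)
          = ((-1:ℝ))^i * (((m:ℝ)+1) * t.esymm i) := by linear_combination hc3
      exact mul_left_cancel₀ (pow_ne_zero i (by norm_num : (-1:ℝ) ≠ 0)) h4
    have IHt := IH t hcard
    have hpi : ∀ i : ℕ, i ≤ m →
        s.esymm i / ((m+1).choose i : ℝ) = t.esymm i / (m.choose i : ℝ) := by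
      intro i hi
      have hcc : (m+1) * (m.choose i) = ((m+1).choose i) * (m + 1 - i) := by
        rw [Nat.add_one_mul_choose_eq]
        exact Nat.choose_succ_right_eq (m+1) i
      have h1 : (0:ℝ) < ((m+1).choose i : ℝ) := by
        exact_mod_cast Nat.choose_pos (by omega : i ≤ m + 1)
      have h2 : (0:ℝ) < (m.choose i : ℝ) := by exact_mod_cast Nat.choose_pos hi
      rw [div_eq_div_iff h1.ne' h2.ne']
      have hccR : ((m:ℝ)+1) * (m.choose i : ℝ) = ((m+1).choose i : ℝ) * ((m:ℝ) + 1 - i) := by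
        have h0 := congrArg (Nat.cast : ℕ → ℝ) hcc
        push_cast [Nat.cast_sub (by omega : i ≤ m + 1)] at h0
        linear_combination h0
      have hk := key i hi
      have hm1 : (0:ℝ) < (m:ℝ) + 1 := by positivity
      have hmul : ((m:ℝ)+1) * (s.esymm i * (m.choose i : ℝ))
          = ((m:ℝ)+1) * (t.esymm i * ((m+1).choose i : ℝ)) := by
        linear_combination ((m+1).choose i : ℝ) * hk + s.esymm i * hccR
      exact mul_left_cancel₀ hm1.ne' hmul
    rw [hpi (j-1) (by omega), hpi j (by omega), hpi (j+1) (by omega)]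
    exact IHt


lemma esymm_zero_of_card_lt (s : Multiset ℝ) {i : ℕ} (h : Multiset.card s < i) :
    s.esymm i = 0 := by
  have h0 := Multiset.powersetCard_card_add s (i := i - Multiset.card s) (by omega)
  have he : Multiset.card s + (i - Multiset.card s) = i := by omega
  rw [he] at h0
  rw [Multiset.esymm, h0]
  simp

lemma esymm_zero' (s : Multiset ℝ) : s.esymm 0 = 1 := by
  simp [Multiset.esymm, Multiset.powersetCard_zero_left]

lemma newton_unnorm (s : Multiset ℝ) (p : ℕ)
    (h0 : 0 < s.esymm p) (h2 : 0 < s.esymm (p+2)) :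
    s.esymm p * s.esymm (p+2) ≤ (s.esymm (p+1))^2 := by
  set m := Multiset.card s with hmdef
  have hm : p + 2 ≤ m := by
    by_contra hcon
    have := esymm_zero_of_card_lt s (i := p+2) (by omega)
    rw [this] at h2
    exact lt_irrefl 0 h2
  have N := newton_norm (p+1) (by omega) m hm s rfl
  simp only [Nat.add_sub_cancel] at N
  have hCa : (0:ℝ) < (m.choose p : ℝ) := by
    exact_mod_cast Nat.choose_pos (by omega : p ≤ m)
  have hCj : (0:ℝ) < (m.choose (p+1) : ℝ) := by
    exact_mod_cast Nat.choose_pos (by omega : p + 1 ≤ m)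
  have hCb : (0:ℝ) < (m.choose (p+2) : ℝ) := by
    exact_mod_cast Nat.choose_pos (by omega : p + 2 ≤ m)
  rw [div_mul_div_comm, div_pow, div_le_div_iff₀ (by positivity) (by positivity)] at N
  have hch := choose_mul_le m p
  have hfin : s.esymm p * s.esymm (p+2) * ((m.choose (p+1) : ℝ) * (m.choose (p+1) : ℝ))
      ≤ (s.esymm (p+1))^2 * ((m.choose (p+1) : ℝ) * (m.choose (p+1) : ℝ)) := by
    calc s.esymm p * s.esymm (p+2) * ((m.choose (p+1) : ℝ) * (m.choose (p+1) : ℝ))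
        ≤ (s.esymm (p+1))^2 * ((m.choose p : ℝ) * (m.choose (p+2) : ℝ)) := by
          have : ((m.choose (p+1) : ℝ) * (m.choose (p+1) : ℝ)) = (m.choose (p+1) : ℝ)^2 := by ring
          nlinarith [N]
      _ ≤ (s.esymm (p+1))^2 * ((m.choose (p+1) : ℝ) * (m.choose (p+1) : ℝ)) := by
          nlinarith [hch, sq_nonneg (s.esymm (p+1))]
  exact le_of_mul_le_mul_right hfin (by positivity)

lemma newton_unnorm_lt (s : Multiset ℝ) (p : ℕ)
    (h0 : 0 < s.esymm p) (h2 : 0 < s.esymm (p+2)) (hm : p + 2 ≤ Multiset.card s) :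
    s.esymm p * s.esymm (p+2) < (s.esymm (p+1))^2 := by
  set m := Multiset.card s with hmdef
  have N := newton_norm (p+1) (by omega) m hm s rfl
  simp only [Nat.add_sub_cancel] at N
  have hCa : (0:ℝ) < (m.choose p : ℝ) := by
    exact_mod_cast Nat.choose_pos (by omega : p ≤ m)
  have hCj : (0:ℝ) < (m.choose (p+1) : ℝ) := by
    exact_mod_cast Nat.choose_pos (by omega : p + 1 ≤ m)
  have hCb : (0:ℝ) < (m.choose (p+2) : ℝ) := by
    exact_mod_cast Nat.choose_pos (by omega : p + 2 ≤ m)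
  have hEsq : 0 < (s.esymm (p+1))^2 := by
    have hpos : (0:ℝ) < s.esymm p / (m.choose p : ℝ) * (s.esymm (p+2) / (m.choose (p+2) : ℝ)) := by
      positivity
    have := lt_of_lt_of_le hpos N
    have h' : (0:ℝ) < (s.esymm (p+1))^2 / ((m.choose (p+1) : ℝ))^2 := by
      rw [div_pow] at this; exact this
    by_contra hc
    push_neg at hc
    have : (s.esymm (p+1))^2 = 0 := le_antisymm hc (sq_nonneg _)
    rw [this, zero_div] at h'
    exact lt_irrefl 0 h'
  rw [div_mul_div_comm, div_pow, div_le_div_iff₀ (by positivity) (by positivity)] at N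
  have hch := choose_mul_lt m p hm
  have hfin : s.esymm p * s.esymm (p+2) * ((m.choose (p+1) : ℝ) * (m.choose (p+1) : ℝ))
      < (s.esymm (p+1))^2 * ((m.choose (p+1) : ℝ) * (m.choose (p+1) : ℝ)) := by
    calc s.esymm p * s.esymm (p+2) * ((m.choose (p+1) : ℝ) * (m.choose (p+1) : ℝ))
        ≤ (s.esymm (p+1))^2 * ((m.choose p : ℝ) * (m.choose (p+2) : ℝ)) := by
          nlinarith [N]
      _ < (s.esymm (p+1))^2 * ((m.choose (p+1) : ℝ) * (m.choose (p+1) : ℝ)) := by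
          exact mul_lt_mul_of_pos_left hch hEsq
  exact lt_of_mul_lt_mul_right hfin (by positivity)

lemma esymm_split {n : ℕ} (i : Fin n) (j : ℕ) (x : Fin n → ℝ) :
    esymm n (j+1) x = (∑ S ∈ (univ.erase i).powersetCard (j+1), ∏ l ∈ S, x l)
      + x i * (∑ S ∈ (univ.erase i).powersetCard j, ∏ l ∈ S, x l) := by
  classical
  unfold esymm
  have hu : (univ : Finset (Fin n)) = insert i (univ.erase i) :=
    (insert_erase (mem_univ i)).symm
  conv_lhs => rw [hu]
  rw [powersetCard_succ_insert (notMem_erase i univ)]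
  rw [sum_union]
  · congr 1
    rw [sum_image]
    · rw [mul_sum]
      refine sum_congr rfl fun S hS => ?_
      have hiS : i ∉ S := by
        have := (mem_powersetCard.1 hS).1
        exact fun hc => (notMem_erase i univ) (this hc)
      rw [prod_insert hiS]
    · intro S hS S' hS' h
      have hiS : i ∉ S := fun hc => (notMem_erase i univ) ((mem_powersetCard.1 hS).1 hc)
      have hiS' : i ∉ S' := fun hc => (notMem_erase i univ) ((mem_powersetCard.1 hS').1 hc)
      rw [← erase_insert hiS, ← erase_insert hiS', h]
  · rw [disjoint_left]
    intro S hS hS'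
    have h1 : i ∉ S := fun hc => (notMem_erase i univ) ((mem_powersetCard.1 hS).1 hc)
    obtain ⟨T, hT, rfl⟩ := mem_image.1 hS'
    exact h1 (mem_insert_self i T)

lemma sigma_pos {n k : ℕ} (κ : Fin n → ℝ)
    (hκ : ∀ j : ℕ, 1 ≤ j → j ≤ k → 0 < esymm n j κ) (i : Fin n) :
    ∀ j, j + 1 ≤ k → 0 < (((univ.erase i) : Finset (Fin n)).val.map κ).esymm j := by
  classical
  set S : Multiset ℝ := ((univ.erase i) : Finset (Fin n)).val.map κ with hS
  have hsig : ∀ r, S.esymm r = ∑ T ∈ (univ.erase i).powersetCard r, ∏ l ∈ T, κ l :=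
    fun r => Finset.esymm_map_val κ (univ.erase i) r
  intro j
  induction j using Nat.strong_induction_on with
  | _ j IH =>
    intro hjk
    match j with
    | 0 => rw [esymm_zero']; norm_num
    | p+1 =>
      have hp : 0 < S.esymm p := IH p (by omega) (by omega)
      by_contra hcon
      push_neg at hcon
      have hsplit1 : esymm n (p+1) κ = S.esymm (p+1) + κ i * S.esymm p := by
        rw [esymm_split i p κ, hsig, hsig]
      have h1 := hκ (p+1) (by omega) (by omega)
      rw [hsplit1] at h1
      have ht : 0 < κ i := by nlinarith
      have hsplit2 : esymm n (p+2) κ = S.esymm (p+2) + κ i * S.esymm (p+1) := by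
        rw [esymm_split i (p+1) κ, hsig, hsig]
      have h2 := hκ (p+2) (by omega) (by omega)
      rw [hsplit2] at h2
      have h22 : 0 < S.esymm (p+2) := by nlinarith
      have hN := newton_unnorm S p hp h22
      nlinarith [hN, h1, h2, hp, ht, hcon]


end EsymmAux

open EsymmAux

/-- For `2 ≤ k ≤ n`, the quotient `qₖ = sₖ / s_{k−1}` is strictly monotone on the
Gårding cone `Γₖ`: all partial derivatives `∂qₖ/∂κᵢ` are positive there. -/
theorem esymm_quotient_strictly_monotone_on_gardingCone {n k : ℕ}
    (hk2 : 2 ≤ k) (hkn : k ≤ n)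
    (κ : Fin n → ℝ) (hκ : κ ∈ gardingCone n k) (i : Fin n) :
    0 < fderiv ℝ (fun x => esymm n k x / esymm n (k - 1) x) κ (Pi.single i 1) := by
  classical
  obtain ⟨p, rfl⟩ : ∃ p, k = p + 2 := ⟨k - 2, by omega⟩
  have hκ' : ∀ j : ℕ, 1 ≤ j → j ≤ p + 2 → 0 < esymm n j κ := hκ
  have hk1 : p + 2 - 1 = p + 1 := rfl
  rw [hk1]
  set v : Fin n → ℝ := Pi.single i (1:ℝ) with hv
  set Sm : Multiset ℝ := ((univ.erase i) : Finset (Fin n)).val.map κ with hSm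
  set σ : ℕ → ℝ := fun j => Sm.esymm j with hσ
  have hσF : ∀ r, σ r = ∑ T ∈ (univ.erase i).powersetCard r, ∏ l ∈ T, κ l :=
    fun r => Finset.esymm_map_val κ (univ.erase i) r
  have hs1 : esymm n (p+1) κ = σ (p+1) + κ i * σ p := by
    rw [esymm_split i p κ, ← hσF, ← hσF]
  have hs2 : esymm n (p+2) κ = σ (p+2) + κ i * σ (p+1) := by
    rw [esymm_split i (p+1) κ, ← hσF, ← hσF]
  have hσp1 : 0 < σ (p+1) := sigma_pos κ hκ' i (p+1) (by omega)
  have hσp : 0 < σ p := sigma_pos κ hκ' i p (by omega)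
  have hg : 0 < esymm n (p+1) κ := hκ' (p+1) (by omega) (by omega)
  have hgne : esymm n (p+1) κ ≠ 0 := hg.ne'
  -- numerator positivity
  have hcardSm : Multiset.card Sm = n - 1 := by
    rw [hSm, Multiset.card_map]
    show (univ.erase i).card = n - 1
    rw [card_erase_of_mem (mem_univ i), card_univ, Fintype.card_fin]
  have hnum : 0 < σ (p+1)^2 - σ (p+2) * σ p := by
    rcases le_or_gt (σ (p+2)) 0 with h | h
    · nlinarith
    · have hm : p + 2 ≤ Multiset.card Sm := by
        by_contra hc
        have h0 := esymm_zero_of_card_lt Sm (i := p+2) (by omega)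
        have hz : σ (p+2) = 0 := h0
        rw [hz] at h
        exact lt_irrefl 0 h
      have := newton_unnorm_lt Sm p hσp h hm
      nlinarith
  -- differentiability
  have hdiff : ∀ r, DifferentiableAt ℝ (fun x : Fin n → ℝ => esymm n r x) κ := by
    intro r
    apply DifferentiableAt.fun_sum
    intro S _
    have hproj : ∀ l : Fin n, HasFDerivAt (fun x : Fin n → ℝ => x l)
        (ContinuousLinearMap.proj (R := ℝ) (φ := fun _ : Fin n => ℝ) l) κ := fun l =>
      (ContinuousLinearMap.proj (R := ℝ) (φ := fun _ : Fin n => ℝ) l).hasFDerivAt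
    exact (HasFDerivAt.finset_prod (u := S) (g := fun l (x : Fin n → ℝ) => x l)
      (g' := fun l => ContinuousLinearMap.proj (R := ℝ) (φ := fun _ : Fin n => ℝ) l)
      (fun l _ => hproj l)).differentiableAt
  have hq : DifferentiableAt ℝ (fun x => esymm n (p+2) x / esymm n (p+1) x) κ := by
    simp only [div_eq_mul_inv]
    exact (hdiff (p+2)).mul ((hdiff (p+1)).inv hgne)
  -- the curve
  have hcurve : HasDerivAt (fun tt : ℝ => κ + tt • v) v 0 := by
    have h1 : HasDerivAt (fun tt : ℝ => tt • v) ((1:ℝ) • v) 0 :=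
      (hasDerivAt_id 0).smul_const v
    simpa using h1.const_add κ
  have h0v : κ + (0:ℝ) • v = κ := by simp
  have hF : HasFDerivAt (fun x => esymm n (p+2) x / esymm n (p+1) x)
      (fderiv ℝ (fun x => esymm n (p+2) x / esymm n (p+1) x) κ) (κ + (0:ℝ) • v) := by
    rw [h0v]; exact hq.hasFDerivAt
  have hcomp : HasDerivAt
      (fun tt : ℝ => esymm n (p+2) (κ + tt • v) / esymm n (p+1) (κ + tt • v))
      (fderiv ℝ (fun x => esymm n (p+2) x / esymm n (p+1) x) κ v) 0 :=
    by have := hF.comp_hasDerivAt (x := 0) hcurve; exact this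
  -- explicit form
  have hfun : (fun tt : ℝ => esymm n (p+2) (κ + tt • v) / esymm n (p+1) (κ + tt • v))
      = (fun tt : ℝ => (σ (p+2) + (κ i + tt) * σ (p+1)) / (σ (p+1) + (κ i + tt) * σ p)) := by
    funext tt
    have hcoord : ∀ l ∈ univ.erase i, (κ + tt • v) l = κ l := by
      intro l hl
      have hne : l ≠ i := (mem_erase.1 hl).1
      simp [hv, Pi.single_apply, hne]
    have hci : (κ + tt • v) i = κ i + tt := by simp [hv]
    have hsa : ∀ r, (∑ T ∈ (univ.erase i).powersetCard r, ∏ l ∈ T, (κ + tt • v) l) = σ r := by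
      intro r
      rw [hσF]
      refine sum_congr rfl fun T hT => prod_congr rfl fun l hl => hcoord l ?_
      exact (mem_powersetCard.1 hT).1 hl
    rw [esymm_split i (p+1) _, esymm_split i p _, hsa, hsa, hsa, hci]
  -- explicit derivative
  have hnumD : HasDerivAt (fun tt : ℝ => σ (p+2) + (κ i + tt) * σ (p+1)) (σ (p+1)) 0 := by
    have h1 : HasDerivAt (fun tt : ℝ => κ i + tt) 1 0 := by
      simpa using (hasDerivAt_id (0:ℝ)).const_add (κ i)
    simpa using (h1.mul_const (σ (p+1))).const_add (σ (p+2))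
  have hdenD : HasDerivAt (fun tt : ℝ => σ (p+1) + (κ i + tt) * σ p) (σ p) 0 := by
    have h1 : HasDerivAt (fun tt : ℝ => κ i + tt) 1 0 := by
      simpa using (hasDerivAt_id (0:ℝ)).const_add (κ i)
    simpa using (h1.mul_const (σ p)).const_add (σ (p+1))
  have hden0 : σ (p+1) + (κ i + 0) * σ p ≠ 0 := by
    rw [add_zero, ← hs1]; exact hgne
  have hexp := hnumD.div hdenD hden0
  have hval : fderiv ℝ (fun x => esymm n (p+2) x / esymm n (p+1) x) κ v
      = (σ (p+1) * (σ (p+1) + (κ i + 0) * σ p)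
          - (σ (p+2) + (κ i + 0) * σ (p+1)) * σ p)
        / (σ (p+1) + (κ i + 0) * σ p) ^ 2 := by
    rw [hfun] at hcomp
    exact hcomp.unique hexp
  rw [hval]
  apply div_pos
  · nlinarith [hnum]
  · have hd : 0 < σ (p+1) + (κ i + 0) * σ p := by
      rw [add_zero, ← hs1]; exact hg
    positivity
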